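/- arXiv:2303.04969 — 3 statements merged into one kernel-verified Lean document; each statement's English description precedes it below -/
import Mathlib

section
/- Let γ, Λ ∈ M₂(ℂ) satisfy det γ = 0, det Λ = 0, Λ₂₁ ≠ 0, D := Λ₂₁γ₁₁ − Λ₁₁γ₂₁ ≠ 0, and the trace identity Λ₁₁γ₂₂ − Λ₁₂γ₂₁ − Λ₂₁γ₁₂ + Λ₂₂γ₁₁ = 0. Then G := Λ₁₁/Λ₂₁ and ω := Λ₂₁²/D satisfy [[Gω, −G²ω],[ω, −Gω]] · γ = Λ. Moreover this pair is unique: if G′, ω′ ∈ ℂ satisfy [[G′ω′, −G′²ω′],[ω′, −G′ω′]] · γ = Λ, then G′ = G and ω′ = ω. -/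
open Matrix

theorem weierstrass_data_exists_unique (γ Λ : Matrix (Fin 2) (Fin 2) ℂ)
    (hγ : γ.det = 0) (hΛ : Λ.det = 0) (h21 : Λ 1 0 ≠ 0)
    (hD : Λ 1 0 * γ 0 0 - Λ 0 0 * γ 1 0 ≠ 0)
    (htr : Λ 0 0 * γ 1 1 - Λ 0 1 * γ 1 0 - Λ 1 0 * γ 0 1 + Λ 1 1 * γ 0 0 = 0) :
    (!![(Λ 0 0 / Λ 1 0) * (Λ 1 0 ^ 2 / (Λ 1 0 * γ 0 0 - Λ 0 0 * γ 1 0)),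
        -(Λ 0 0 / Λ 1 0) ^ 2 * (Λ 1 0 ^ 2 / (Λ 1 0 * γ 0 0 - Λ 0 0 * γ 1 0));
        Λ 1 0 ^ 2 / (Λ 1 0 * γ 0 0 - Λ 0 0 * γ 1 0),
        -(Λ 0 0 / Λ 1 0) * (Λ 1 0 ^ 2 / (Λ 1 0 * γ 0 0 - Λ 0 0 * γ 1 0))] * γ = Λ) ∧
    (∀ G' ω' : ℂ,
      !![G' * ω', -G' ^ 2 * ω'; ω', -G' * ω'] * γ = Λ →
      G' = Λ 0 0 / Λ 1 0 ∧ ω' = Λ 1 0 ^ 2 / (Λ 1 0 * γ 0 0 - Λ 0 0 * γ 1 0)) := by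
  rw [Matrix.det_fin_two] at hγ hΛ
  have key : Λ 1 0 * (Λ 1 0 * γ 0 1 - Λ 0 0 * γ 1 1)
      = Λ 1 1 * (Λ 1 0 * γ 0 0 - Λ 0 0 * γ 1 0) := by
    linear_combination (-(Λ 1 0)) * htr + γ 1 0 * hΛ
  constructor
  · ext i j
    fin_cases i <;> fin_cases j <;>
      simp only [Matrix.mul_apply, Fin.sum_univ_two, Matrix.cons_val', Matrix.cons_val_zero,
        Matrix.cons_val_one, Matrix.head_cons, Matrix.head_fin_const, Matrix.empty_val',
        Matrix.cons_val_fin_one, Fin.isValue, Matrix.of_apply, Fin.zero_eta, Fin.mk_one] <;>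
      field_simp
    · ring
    · apply mul_left_cancel₀ h21
      linear_combination Λ 0 0 * key + (Λ 1 0 * γ 0 0 - Λ 0 0 * γ 1 0) * hΛ
    · ring
    · linear_combination key
  · intro G' ω' h
    have h00 := congr_fun (congr_fun h 0) 0
    have h10 := congr_fun (congr_fun h 1) 0
    simp only [Matrix.mul_apply, Fin.sum_univ_two, Matrix.cons_val', Matrix.cons_val_zero,
      Matrix.cons_val_one, Matrix.head_cons, Matrix.head_fin_const, Matrix.empty_val',
      Matrix.cons_val_fin_one, Fin.isValue, Matrix.of_apply] at h00 h10
    have hG : G' = Λ 0 0 / Λ 1 0 := by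
      field_simp
      linear_combination h00 - G' * h10
    refine ⟨hG, ?_⟩
    rw [hG] at h10
    field_simp at h10 ⊢
    rw [eq_div_iff (by intro h0; apply hD; linear_combination h0)]; linear_combination h10
end

section
/- Let a,b,c,d,e,f ∈ ℝ with b² + c² = e² + f² > 0 and be + cf = 0. Set γ = 2f₃, T = aγ + b f₁ + c f₂, L = dγ + e f₁ + f f₂, and Λ = (1/2)(T − iL) ∈ M₂(ℂ). Then: (i) |γ₁₁Λ₂₁ − γ₂₁Λ₁₁|² = 2((b² + c²) − (bf − ce)); (ii) (bf − ce)² = (b² + c²)²; and (iii) γ₁₁Λ₂₁ − γ₂₁Λ₁₁ ≠ 0 if and only if bf − ce < 0. (This is the orientability condition: the Weierstrass data of the Björling problem are well defined exactly when the signed area bf − ce of T and L is negative.) -/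
open Matrix

noncomputable def f1 : Matrix (Fin 2) (Fin 2) ℂ := !![0, 1; 1, 0]
noncomputable def f2 : Matrix (Fin 2) (Fin 2) ℂ := !![0, Complex.I; -Complex.I, 0]
noncomputable def f3 : Matrix (Fin 2) (Fin 2) ℂ := !![1, 0; 0, 0]

/-- γ = 2f₃ -/
noncomputable def γ₀ : Matrix (Fin 2) (Fin 2) ℂ := (2 : ℂ) • f3

/-- T = aγ + bf₁ + cf₂ -/
noncomputable def Tvec (a b c : ℝ) : Matrix (Fin 2) (Fin 2) ℂ :=
  (a : ℂ) • γ₀ + (b : ℂ) • f1 + (c : ℂ) • f2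

/-- Λ = (1/2)(T − iL) -/
noncomputable def Λmat (a b c d e f : ℝ) : Matrix (Fin 2) (Fin 2) ℂ :=
  (1 / 2 : ℂ) • (Tvec a b c - Complex.I • Tvec d e f)

theorem orientability_condition (a b c d e f : ℝ)
    (hnorm : b ^ 2 + c ^ 2 = e ^ 2 + f ^ 2) (hpos : 0 < b ^ 2 + c ^ 2)
    (horth : b * e + c * f = 0) :
    ‖γ₀ 0 0 * Λmat a b c d e f 1 0 - γ₀ 1 0 * Λmat a b c d e f 0 0‖ ^ 2
        = 2 * ((b ^ 2 + c ^ 2) - (b * f - c * e)) ∧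
    (b * f - c * e) ^ 2 = (b ^ 2 + c ^ 2) ^ 2 ∧
    ((γ₀ 0 0 * Λmat a b c d e f 1 0 - γ₀ 1 0 * Λmat a b c d e f 0 0 ≠ 0)
      ↔ b * f - c * e < 0) := by
  have hz : γ₀ 0 0 * Λmat a b c d e f 1 0 - γ₀ 1 0 * Λmat a b c d e f 0 0
      = Complex.mk (b - f) (-(c + e)) := by
    simp only [γ₀, Λmat, Tvec, f1, f2, f3, Matrix.smul_apply, Matrix.add_apply,
      Matrix.sub_apply, Matrix.cons_val', Matrix.cons_val_zero, Matrix.cons_val_one,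
      Matrix.head_cons, Matrix.head_fin_const, Matrix.empty_val', Matrix.cons_val_fin_one,
      smul_eq_mul]
    apply Complex.ext <;>
      simp [Complex.ext_iff, Complex.add_re, Complex.add_im, Complex.mul_re, Complex.mul_im,
        Complex.I_re, Complex.I_im, Complex.ofReal_re, Complex.ofReal_im] <;> ring
  have habs : ‖γ₀ 0 0 * Λmat a b c d e f 1 0 - γ₀ 1 0 * Λmat a b c d e f 0 0‖ ^ 2
      = (b - f) ^ 2 + (c + e) ^ 2 := by
    rw [hz, Complex.sq_norm, Complex.normSq_mk]; ring
  have h2 : (b * f - c * e) ^ 2 = (b ^ 2 + c ^ 2) ^ 2 := by nlinarith [sq_nonneg (b*e+c*f)]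
  refine ⟨by rw [habs]; nlinarith, h2, ?_⟩
  constructor
  · intro h
    have hne : (b - f) ^ 2 + (c + e) ^ 2 ≠ 0 := by
      intro h0
      apply h
      rw [hz]
      have h1 : b - f = 0 := by nlinarith [sq_nonneg (b-f), sq_nonneg (c+e)]
      have h2' : c + e = 0 := by nlinarith [sq_nonneg (b-f), sq_nonneg (c+e)]
      simp [Complex.ext_iff, h1, h2']
    have hgt : 0 < (b - f) ^ 2 + (c + e) ^ 2 :=
      lt_of_le_of_ne (by positivity) (Ne.symm hne)
    have : b * f - c * e < b ^ 2 + c ^ 2 := by nlinarith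
    rcases sq_eq_sq_iff_eq_or_eq_neg.mp h2 with h3 | h3
    · linarith
    · linarith
  · intro h hz0
    rw [hz] at hz0
    have : (b - f) ^ 2 + (c + e) ^ 2 = 0 := by
      have hr := congrArg Complex.re hz0
      have hi := congrArg Complex.im hz0
      simp at hr hi
      nlinarith
    nlinarith
end

section
/- For β ∈ ℂ with β ≠ 0, define F₁ : ℂ → M₂(ℂ) by F₁(z) = [[cos(βz) + βz·sin(βz), z·cos(βz) − β⁻¹·sin(βz)],[β·sin(βz), cos(βz)]]. Then for every z ∈ ℂ: (i) det F₁(z) = 1, and (ii) F₁ is complex-differentiable at z with F₁′(z) = β²·[[z, −z²],[1, −z]]·F₁(z); equivalently, F₁ solves dF·F⁻¹ = [[G, −G²],[1, −G]]·Ω with Weierstrass data G = z and Ω = β² dz. -/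
open Matrix

/-- The frame F₁ for the parabolic catenoid. -/
noncomputable def F₁ (β : ℂ) (z : ℂ) : Matrix (Fin 2) (Fin 2) ℂ :=
  !![Complex.cos (β * z) + β * z * Complex.sin (β * z),
     z * Complex.cos (β * z) - β⁻¹ * Complex.sin (β * z);
     β * Complex.sin (β * z), Complex.cos (β * z)]

theorem parabolic_frame (β : ℂ) (hβ : β ≠ 0) (z : ℂ) :
    (F₁ β z).det = 1 ∧
    ∀ i j : Fin 2,
      HasDerivAt (fun w => F₁ β w i j)
        ((β ^ 2 • (!![z, -z ^ 2; 1, -z] * F₁ β z)) i j) z := by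
  constructor
  · have h := Complex.sin_sq_add_cos_sq (β * z)
    simp only [F₁, Matrix.det_fin_two_of]
    field_simp
    linear_combination h
  · have hid : HasDerivAt (fun w : ℂ => β * w) β z := by
      simpa using (hasDerivAt_id z).const_mul β
    have hc : HasDerivAt (fun w => Complex.cos (β * w)) (-Complex.sin (β * z) * β) z :=
      (Complex.hasDerivAt_cos (β * z)).comp z hid
    have hs : HasDerivAt (fun w => Complex.sin (β * w)) (Complex.cos (β * z) * β) z :=
      (Complex.hasDerivAt_sin (β * z)).comp z hid
    intro i j
    fin_cases i <;> fin_cases j <;>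
      simp only [F₁, Matrix.smul_apply, Matrix.mul_apply, Fin.sum_univ_two,
        Matrix.cons_val', Matrix.cons_val_zero, Matrix.cons_val_one, Matrix.head_cons,
        Matrix.head_fin_const, Matrix.of_apply, Matrix.cons_val_fin_one, smul_eq_mul, Fin.zero_eta, Fin.mk_one]
    · have := hc.add (((hasDerivAt_id z).const_mul β).mul hs)
      convert this using 1
      iterate 3 rfl
      simp [Matrix.cons_val_zero, Matrix.cons_val_one]
      ring
    · have := ((hasDerivAt_id z).mul hc).sub (hs.const_mul β⁻¹)
      convert this using 1
      iterate 3 rfl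
      simp [Matrix.cons_val_zero, Matrix.cons_val_one]
      field_simp
      ring
    · have := hs.const_mul β
      convert this using 1
      iterate 2 rfl
      simp [Matrix.cons_val_zero, Matrix.cons_val_one]
      ring
    · convert hc using 1
      simp [Matrix.cons_val_zero, Matrix.cons_val_one]
      field_simp
      ring
end
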